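/- Let 𝓗 have two-point distribution P(𝓗=H₁)=p, P(𝓗=H₂)=1−p with 0<H₁<H₂<1, and fix τ>0. Then as t/τ → 0⁺, the second moment of the increment of RL FBMRE satisfies E[(B*_𝓗(t+τ)−B*_𝓗(t))²] → p τ^{2H₁} + (1−p) τ^{2H₂}, which coincides with the (t-independent) second moment of the increment of FBMRE. -/

import Mathlib

open MeasureTheory Real Filter

/-- For RL FBMRE with two-point distributed Hurst exponent (encoded via the
explicit formula for the second moment of the increment), for fixed `τ > 0`, as `t/τ → 0⁺`
(i.e. `t → 0⁺`) the second moment of the increment converges to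
`p τ^{2H₁} + (1−p) τ^{2H₂}`, which coincides with the (t-independent) second moment of the
increment of FBMRE `Y` (whose increment second moment is `M_𝓗(2 log τ)`). -/
lemma aux_integral_bound (h : ℝ) (h0 : 0 < h) (h1 : h < 1) {x : ℝ} (hx : x ∈ Set.Ioc (0:ℝ) 1) :
    (∫ u in (0:ℝ)..x, ((1 + u) ^ (h - 1/2) - u ^ (h - 1/2)) ^ 2)
      ≤ 2 * x + x ^ (2*h) / (2*h) := by
  have hxpos := hx.1
  have hr : (-1:ℝ) < 2*h - 1 := by linarith
  have hrint : IntervalIntegrable (fun u : ℝ => 2 + u ^ (2*h-1)) volume 0 x :=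
    intervalIntegrable_const.add (intervalIntegral.intervalIntegrable_rpow' hr)
  have hpt : ∀ u ∈ Set.Icc (0:ℝ) x,
      ((1 + u) ^ (h - 1/2) - u ^ (h - 1/2)) ^ 2 ≤ 2 + u ^ (2*h-1) := by
    intro u hu
    have hu0 : (0:ℝ) ≤ u := hu.1
    have ha : (0:ℝ) ≤ (1+u) ^ (h - 1/2) := Real.rpow_nonneg (by linarith) _
    have hb : (0:ℝ) ≤ u ^ (h - 1/2) := Real.rpow_nonneg hu0 _
    have hsq1 : ((1+u) ^ (h - 1/2)) ^ 2 = (1+u) ^ (2*h - 1) := by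
      rw [← Real.rpow_natCast ((1+u) ^ (h - 1/2)) 2, ← Real.rpow_mul (by linarith)]
      norm_num; ring_nf
    have hsq2 : (u ^ (h - 1/2)) ^ 2 = u ^ (2*h - 1) := by
      rw [← Real.rpow_natCast (u ^ (h - 1/2)) 2, ← Real.rpow_mul hu0]
      norm_num; ring_nf
    have hb2 : (1+u) ^ (2*h-1) ≤ 2 := by
      rcases le_or_gt 0 (2*h-1) with hc | hc
      · calc (1+u) ^ (2*h-1) ≤ (2:ℝ) ^ (2*h-1) :=
              Real.rpow_le_rpow (by linarith) (by linarith [hu.2, hx.2]) hc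
          _ ≤ (2:ℝ) ^ (1:ℝ) := Real.rpow_le_rpow_of_exponent_le one_le_two (by linarith)
          _ = 2 := Real.rpow_one 2
      · have := Real.rpow_le_one_of_one_le_of_nonpos (by linarith : (1:ℝ) ≤ 1+u) hc.le
        linarith
    have hab : 0 ≤ (1+u) ^ (h - 1/2) * u ^ (h - 1/2) := mul_nonneg ha hb
    nlinarith
  have hfmeas : AEStronglyMeasurable
      (fun u : ℝ => ((1 + u) ^ (h - 1/2) - u ^ (h - 1/2)) ^ 2)
      (volume.restrict (Set.uIoc (0:ℝ) x)) := by
    apply Measurable.aestronglyMeasurable; fun_prop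
  have hfint : IntervalIntegrable
      (fun u : ℝ => ((1 + u) ^ (h - 1/2) - u ^ (h - 1/2)) ^ 2) volume 0 x := by
    refine hrint.mono_fun hfmeas ?_
    rw [Set.uIoc_of_le hxpos.le]
    refine (ae_restrict_iff' measurableSet_Ioc).2 (Filter.Eventually.of_forall fun u hu => ?_)
    have h1' := hpt u ⟨hu.1.le, hu.2⟩
    have hg0 : (0:ℝ) ≤ 2 + u ^ (2*h-1) := by
      have := Real.rpow_nonneg hu.1.le (2*h-1); linarith
    simp only [Real.norm_eq_abs]
    rw [abs_of_nonneg (sq_nonneg _), abs_of_nonneg hg0]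
    exact h1'
  have hmono := intervalIntegral.integral_mono_on hxpos.le hfint hrint hpt
  have hval : (∫ u in (0:ℝ)..x, (2 + u ^ (2*h-1))) = 2 * x + x ^ (2*h) / (2*h) := by
    rw [intervalIntegral.integral_add intervalIntegrable_const
      (intervalIntegral.intervalIntegrable_rpow' hr),
      intervalIntegral.integral_const,
      integral_rpow (Or.inl hr)]
    rw [Real.zero_rpow (by linarith : 2*h-1+1 ≠ 0)]
    simp only [smul_eq_mul, sub_zero]
    ring_nf
  linarith [hmono, hval.le, hval.ge]

lemma aux_I_tendsto (h : ℝ) (h0 : 0 < h) (h1 : h < 1) :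
    Tendsto (fun x : ℝ => ∫ u in (0:ℝ)..x, ((1 + u) ^ (h - 1/2) - u ^ (h - 1/2)) ^ 2)
      (nhdsWithin 0 (Set.Ioi 0)) (nhds 0) := by
  have hub : Tendsto (fun x : ℝ => 2 * x + x ^ (2*h) / (2*h))
      (nhdsWithin 0 (Set.Ioi 0)) (nhds 0) := by
    have h2h : (0:ℝ) < 2*h := by linarith
    have hA : Tendsto (fun x : ℝ => x ^ (2*h)) (nhds 0) (nhds 0) := by
      have := (Real.continuousAt_rpow_const 0 (2*h) (Or.inr h2h.le)).tendsto
      simpa [Real.zero_rpow h2h.ne'] using this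
    have : Tendsto (fun x : ℝ => 2 * x + x ^ (2*h) / (2*h)) (nhds 0) (nhds (2*0 + 0/(2*h))) :=
      ((tendsto_id.const_mul 2).add (hA.div_const _))
    simpa using this.mono_left nhdsWithin_le_nhds
  refine tendsto_of_tendsto_of_tendsto_of_le_of_le' tendsto_const_nhds hub ?_ ?_
  · filter_upwards [self_mem_nhdsWithin] with x hx
    exact intervalIntegral.integral_nonneg (le_of_lt hx) (fun u _ => sq_nonneg _)
  · filter_upwards [Ioc_mem_nhdsGT_of_mem (by simp : (0:ℝ) ∈ Set.Ico (0:ℝ) 1)] with x hx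
    exact aux_integral_bound h h0 h1 hx

theorem rlfbmre_two_point_increment_short_time
    {Ω : Type*} [MeasurableSpace Ω] (μ : Measure Ω) [IsProbabilityMeasure μ]
    (p H₁ H₂ τ : ℝ) (hp : p ∈ Set.Ioo (0 : ℝ) 1)
    (h1 : 0 < H₁) (h12 : H₁ < H₂) (h2 : H₂ < 1) (hτ : 0 < τ)
    (𝓗 : Ω → ℝ) (h𝓗 : Measurable 𝓗)
    (hd1 : μ (𝓗 ⁻¹' {H₁}) = ENNReal.ofReal p)
    (hd2 : μ (𝓗 ⁻¹' {H₂}) = ENNReal.ofReal (1 - p))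
    (X : ℝ → Ω → ℝ)
    (hmom : ∀ t : ℝ, 0 ≤ t →
      ∫ ω, (X (t + τ) ω - X t ω) ^ 2 ∂μ
        = p * (2 * H₁ * τ ^ (2 * H₁)
            * ((∫ u in (0 : ℝ)..(t / τ), ((1 + u) ^ (H₁ - 1/2) - u ^ (H₁ - 1/2)) ^ 2)
                + 1 / (2 * H₁)))
          + (1 - p) * (2 * H₂ * τ ^ (2 * H₂)
            * ((∫ u in (0 : ℝ)..(t / τ), ((1 + u) ^ (H₂ - 1/2) - u ^ (H₂ - 1/2)) ^ 2)
                + 1 / (2 * H₂))))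
    (Y : ℝ → Ω → ℝ)
    (hY : ∀ t : ℝ, 0 ≤ t →
      ∫ ω, (Y (t + τ) ω - Y t ω) ^ 2 ∂μ
        = ∫ ω, Real.exp ((2 * Real.log τ) * 𝓗 ω) ∂μ) :
    Tendsto (fun t : ℝ => ∫ ω, (X (t + τ) ω - X t ω) ^ 2 ∂μ)
      (nhdsWithin 0 (Set.Ioi 0)) (nhds (p * τ ^ (2 * H₁) + (1 - p) * τ ^ (2 * H₂))) ∧
    (∀ t : ℝ, 0 ≤ t →
      ∫ ω, (Y (t + τ) ω - Y t ω) ^ 2 ∂μ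
        = p * τ ^ (2 * H₁) + (1 - p) * τ ^ (2 * H₂)) := by
  
  have h1' : 0 < H₂ := h1.trans h12
  have h2' : H₁ < 1 := h12.trans h2
  constructor
  · -- Part 1: the limit
    have hdiv : Tendsto (fun t : ℝ => t / τ) (nhdsWithin 0 (Set.Ioi 0))
        (nhdsWithin 0 (Set.Ioi 0)) := by
      apply tendsto_nhdsWithin_of_tendsto_nhds_of_eventually_within
      · have : Tendsto (fun t : ℝ => t / τ) (nhds 0) (nhds (0 / τ)) :=
          tendsto_id.div_const τ
        simpa using this.mono_left nhdsWithin_le_nhds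
      · filter_upwards [self_mem_nhdsWithin] with t ht
        exact div_pos ht hτ
    have k1 := (aux_I_tendsto H₁ h1 h2').comp hdiv
    have k2 := (aux_I_tendsto H₂ h1' h2).comp hdiv
    have hF : Tendsto (fun t : ℝ =>
        p * (2 * H₁ * τ ^ (2 * H₁)
            * ((∫ u in (0 : ℝ)..(t / τ), ((1 + u) ^ (H₁ - 1/2) - u ^ (H₁ - 1/2)) ^ 2)
                + 1 / (2 * H₁)))
          + (1 - p) * (2 * H₂ * τ ^ (2 * H₂)
            * ((∫ u in (0 : ℝ)..(t / τ), ((1 + u) ^ (H₂ - 1/2) - u ^ (H₂ - 1/2)) ^ 2)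
                + 1 / (2 * H₂))))
        (nhdsWithin 0 (Set.Ioi 0))
        (nhds (p * (2 * H₁ * τ ^ (2 * H₁) * (0 + 1 / (2 * H₁)))
          + (1 - p) * (2 * H₂ * τ ^ (2 * H₂) * (0 + 1 / (2 * H₂))))) := by
      exact (((k1.add tendsto_const_nhds).const_mul _).const_mul _).add
        (((k2.add tendsto_const_nhds).const_mul _).const_mul _)
    have hval : p * (2 * H₁ * τ ^ (2 * H₁) * (0 + 1 / (2 * H₁)))
          + (1 - p) * (2 * H₂ * τ ^ (2 * H₂) * (0 + 1 / (2 * H₂)))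
        = p * τ ^ (2 * H₁) + (1 - p) * τ ^ (2 * H₂) := by
      field_simp
      ring
    rw [hval] at hF
    refine hF.congr' ?_
    filter_upwards [self_mem_nhdsWithin] with t ht
    exact (hmom t (le_of_lt ht)).symm
  · -- Part 2
    intro t ht
    rw [hY t ht]
    set c := 2 * Real.log τ with hc
    set A := 𝓗 ⁻¹' {H₁} with hA
    set B := 𝓗 ⁻¹' {H₂} with hB
    have hAm : MeasurableSet A := h𝓗 (measurableSet_singleton H₁)
    have hBm : MeasurableSet B := h𝓗 (measurableSet_singleton H₂)
    have hdisj : Disjoint A B := by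
      refine Set.disjoint_left.2 fun ω hωA hωB => ?_
      have : 𝓗 ω = H₁ := hωA
      have h2 : 𝓗 ω = H₂ := hωB
      exact absurd (this ▸ h2) (ne_of_lt h12)
    have hunion : μ (A ∪ B) = 1 := by
      rw [measure_union hdisj hBm, hd1, hd2,
        ← ENNReal.ofReal_add hp.1.le (by linarith [hp.2])]
      norm_num
    have hcompl : μ ((A ∪ B)ᶜ) = 0 := by
      rw [measure_compl (hAm.union hBm) (measure_ne_top μ _), hunion, measure_univ,
        tsub_self]
    set g : Ω → ℝ := fun ω => A.indicator (fun _ => Real.exp (c * H₁)) ω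
        + B.indicator (fun _ => Real.exp (c * H₂)) ω with hg
    have hae : (fun ω => Real.exp (c * 𝓗 ω)) =ᵐ[μ] g := by
      refine (measure_mono_null ?_ hcompl)
      intro ω hω
      simp only [Set.mem_setOf_eq] at hω
      simp only [Set.mem_compl_iff, Set.mem_union]
      rintro (hωA | hωB)
      · have hH : 𝓗 ω = H₁ := hωA
        have hωB : ω ∉ B := fun hωB => absurd (hH ▸ (hωB : 𝓗 ω = H₂)) (ne_of_lt h12)
        apply hω
        simp [hg, Set.indicator_of_mem hωA, Set.indicator_of_notMem hωB, hH]
      · have hH : 𝓗 ω = H₂ := hωB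
        have hωA : ω ∉ A := fun hωA => absurd ((hωA : 𝓗 ω = H₁).symm.trans hH) (ne_of_lt h12)
        apply hω
        simp [hg, Set.indicator_of_mem hωB, Set.indicator_of_notMem hωA, hH]
    rw [integral_congr_ae hae]
    have hiA : Integrable (A.indicator (fun _ => Real.exp (c * H₁))) μ :=
      (integrable_const _).indicator hAm
    have hiB : Integrable (B.indicator (fun _ => Real.exp (c * H₂))) μ :=
      (integrable_const _).indicator hBm
    have : ∫ ω, g ω ∂μ = (μ A).toReal * Real.exp (c * H₁)
        + (μ B).toReal * Real.exp (c * H₂) := by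
      rw [hg]
      rw [integral_add hiA hiB, integral_indicator_const _ hAm, integral_indicator_const _ hBm]
      simp [smul_eq_mul]
      rfl
    rw [this, hd1, hd2, ENNReal.toReal_ofReal hp.1.le,
      ENNReal.toReal_ofReal (by linarith [hp.2] : (0:ℝ) ≤ 1 - p)]
    have he1 : Real.exp (c * H₁) = τ ^ (2 * H₁) := by
      rw [Real.rpow_def_of_pos hτ]; ring_nf
      rw [hc]; ring_nf
    have he2 : Real.exp (c * H₂) = τ ^ (2 * H₂) := by
      rw [Real.rpow_def_of_pos hτ]; ring_nf
      rw [hc]; ring_nf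
    rw [he1, he2]
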